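/- Let K₁ > 0 and K₂ be real constants with |K₂| < K₁, and let z₀ = log(K₂/K₁ + 1). Then the origin is Lyapunov stable for the planar system v̇ = −e^{z₀}(e^v − 1) − w, ẇ = (K₁ + K₂)(e^v − 1): for every ε > 0 there exists δ > 0 such that every differentiable solution (v, w) of the system on [0, ∞) with ‖(v(0), w(0))‖ < δ satisfies ‖(v(t), w(t))‖ < ε for all t ≥ 0. -/

import Mathlib

/-- The origin is Lyapunov stable for the shifted network-level dynamics. -/
theorem origin_lyapunov_stable (K₁ K₂ : ℝ) (hK₁ : 0 < K₁) (hK₂ : |K₂| < K₁)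
    (z₀ : ℝ) (hz₀ : z₀ = Real.log (K₂ / K₁ + 1)) :
    ∀ ε > (0 : ℝ), ∃ δ > (0 : ℝ), ∀ v w : ℝ → ℝ,
      (∀ t ≥ (0 : ℝ), HasDerivAt v (-Real.exp z₀ * (Real.exp (v t) - 1) - w t) t) →
      (∀ t ≥ (0 : ℝ), HasDerivAt w ((K₁ + K₂) * (Real.exp (v t) - 1)) t) →
      ‖(v 0, w 0)‖ < δ →
      ∀ t ≥ (0 : ℝ), ‖(v t, w t)‖ < ε := by
  intro ε hε
  have hK : 0 < K₁ + K₂ := by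
    have := (abs_lt.mp hK₂).1; linarith
  set V : ℝ × ℝ → ℝ := fun p => Real.exp p.1 - p.1 - 1 + p.2 ^ 2 / (2 * (K₁ + K₂))
    with hVdef
  have hVcont : Continuous V := by fun_prop
  have hV0 : V 0 = 0 := by simp [hVdef]
  -- minimum of V on the sphere of radius ε is positive
  obtain ⟨p₀, hp₀mem, hp₀min⟩ :=
    (isCompact_sphere (0 : ℝ × ℝ) ε).exists_isMinOn
      (NormedSpace.sphere_nonempty.mpr hε.le) hVcont.continuousOn
  have hVnonneg : ∀ p : ℝ × ℝ, 0 ≤ V p := by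
    intro p
    have h1 : 0 ≤ Real.exp p.1 - p.1 - 1 := by
      have := Real.add_one_le_exp p.1; linarith
    have h2 : 0 ≤ p.2 ^ 2 / (2 * (K₁ + K₂)) := by positivity
    simp only [hVdef]; linarith
  have hm : 0 < V p₀ := by
    rcases eq_or_ne p₀.1 0 with h1 | h1
    · have h2 : p₀.2 ≠ 0 := by
        intro h2
        have : p₀ = 0 := Prod.ext h1 h2
        rw [mem_sphere_iff_norm, this, sub_zero, norm_zero] at hp₀mem
        exact hε.ne hp₀mem
      have hpos : 0 < p₀.2 ^ 2 / (2 * (K₁ + K₂)) := by positivity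
      have h3 : 0 ≤ Real.exp p₀.1 - p₀.1 - 1 := by
        have := Real.add_one_le_exp p₀.1; linarith
      simp only [hVdef]; linarith
    · have h3 : 0 < Real.exp p₀.1 - p₀.1 - 1 := by
        have := Real.add_one_lt_exp h1; linarith
      have h2 : 0 ≤ p₀.2 ^ 2 / (2 * (K₁ + K₂)) := by positivity
      simp only [hVdef]; linarith
  set m := V p₀ with hmdef
  -- continuity of V at 0 gives δ₀
  obtain ⟨δ₀, hδ₀pos, hδ₀⟩ := Metric.continuousAt_iff.mp (hVcont.continuousAt (x := (0:ℝ×ℝ))) m hm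
  refine ⟨min δ₀ ε, lt_min hδ₀pos hε, ?_⟩
  intro v w hv hw h0
  -- V along the trajectory
  set f : ℝ → ℝ := fun t => V (v t, w t) with hfdef
  have hf : ∀ t ≥ (0 : ℝ), HasDerivAt f
      (-Real.exp z₀ * (Real.exp (v t) - 1) ^ 2) t := by
    intro t ht
    have hv' := hv t ht
    have hw' := hw t ht
    have h1 : HasDerivAt (fun s => Real.exp (v s) - v s - 1)
        (Real.exp (v t) * (-Real.exp z₀ * (Real.exp (v t) - 1) - w t)
          - (-Real.exp z₀ * (Real.exp (v t) - 1) - w t)) t :=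
      ((hv'.exp).sub hv').sub_const 1
    have h2 : HasDerivAt (fun s => w s ^ 2 / (2 * (K₁ + K₂)))
        ((2 * w t ^ 1 * ((K₁ + K₂) * (Real.exp (v t) - 1))) / (2 * (K₁ + K₂))) t := by
      exact (hw'.pow 2).div_const _
    have h3 := h1.add h2
    convert h3 using 1
    have hKne : (K₁ + K₂) ≠ 0 := hK.ne'
    · rfl
    · rfl
    · rfl
    · field_simp
      ring
  have hcont : ∀ t ≥ (0 : ℝ), ContinuousAt f t := fun t ht =>
    (hf t ht).differentiableAt.continuousAt
  have hanti : AntitoneOn f (Set.Ici 0) := by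
    apply antitoneOn_of_deriv_nonpos (convex_Ici 0)
    · intro t ht; exact (hcont t ht).continuousWithinAt
    · rw [interior_Ici]; intro t ht; exact (hf t ht.le).differentiableAt.differentiableWithinAt
    · rw [interior_Ici]; intro t ht
      rw [(hf t ht.le).deriv]
      have : (0:ℝ) ≤ Real.exp z₀ * (Real.exp (v t) - 1) ^ 2 := by positivity
      linarith
  have hVinit : f 0 < m := by
    have h0' : ‖(v 0, w 0)‖ < δ₀ := lt_of_lt_of_le h0 (min_le_left _ _)
    have := hδ₀ (by rw [dist_eq_norm, sub_zero]; exact h0')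
    rw [hV0] at this
    calc f 0 ≤ |V (v 0, w 0) - 0| := by
          simp only [sub_zero, hfdef]; exact le_abs_self _
      _ < m := this
  -- conclude
  intro t ht
  by_contra hcontra
  push_neg at hcontra
  -- norm function along trajectory
  set g : ℝ → ℝ := fun s => ‖(v s, w s)‖ with hgdef
  have hgcont : ContinuousOn g (Set.Icc 0 t) := by
    apply ContinuousOn.norm
    apply ContinuousOn.prodMk
    · intro s hs
      exact ((hv s hs.1).differentiableAt.continuousAt).continuousWithinAt
    · intro s hs
      exact ((hw s hs.1).differentiableAt.continuousAt).continuousWithinAt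
  have hg0 : g 0 ≤ ε := le_of_lt (lt_of_lt_of_le h0 (min_le_right _ _))
  have hmem : ε ∈ Set.Icc (g 0) (g t) := ⟨hg0, hcontra⟩
  obtain ⟨s, hs, hgs⟩ := intermediate_value_Icc ht hgcont hmem
  have hsphere : (v s, w s) ∈ Metric.sphere (0 : ℝ × ℝ) ε := by
    rw [mem_sphere_iff_norm, sub_zero]; exact hgs
  have h1 : m ≤ V (v s, w s) := hp₀min hsphere
  have h2 : f s ≤ f 0 := hanti (Set.mem_Ici.mpr le_rfl) (Set.mem_Ici.mpr hs.1) hs.1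
  have : V (v s, w s) ≤ f 0 := h2
  linarith
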